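/- Let M be a positive integer and B > 0. Let (ε_n)_{n≥0} be a sequence of nonnegative integers with ε_n ≤ B for all n, and set μ := ∑_{n=0}^{∞} 4^{-(n+1)} ε_n. Assume M·μ ∈ ℤ. Then μ = (1/M) · ⌈ M · ∑_{n=0}^{m} 4^{-(n+1)} ε_n ⌉, where m = ⌊ log(B·M/3) / log 4 ⌋. -/

import Mathlib

/-- Lemma "fast algo": if `ε : ℕ → ℕ` with `ε n ≤ B`, `μ = ∑ 4^{-(n+1)} ε_n`, and
`M·μ ∈ ℤ`, then `μ` equals `(1/M)·⌈M·(partial sum up to m)⌉` where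
`m = ⌊log(B·M/3)/log 4⌋` (assume `B·M/3 ≥ 1`). -/
theorem fast_algo
    (M : ℕ) (hM : 0 < M) (B : ℝ) (hB : 0 < B)
    (ε : ℕ → ℕ) (hεB : ∀ n, (ε n : ℝ) ≤ B)
    (μ : ℝ) (hμ : μ = ∑' n : ℕ, (ε n : ℝ) / 4 ^ (n + 1))
    (hint : ∃ k : ℤ, (M : ℝ) * μ = (k : ℝ))
    (hBM : 1 ≤ B * M / 3)
    (m : ℕ) (hm : (m : ℤ) = ⌊Real.log (B * M / 3) / Real.log 4⌋) :
    μ = (⌈(M : ℝ) * ∑ n ∈ Finset.range (m + 1), (ε n : ℝ) / 4 ^ (n + 1)⌉ : ℤ) / M := by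
  obtain ⟨k, hk⟩ := hint
  have hMR : (0:ℝ) < M := by exact_mod_cast hM
  -- summability
  have hgeo : Summable (fun n : ℕ => B * (1/4:ℝ) ^ (n+1)) := by
    apply Summable.mul_left
    exact (summable_geometric_of_lt_one (by norm_num) (by norm_num)).comp_injective
      (add_left_injective 1)
  have hbound : ∀ n : ℕ, (ε n : ℝ) / 4 ^ (n + 1) ≤ B * (1/4:ℝ) ^ (n+1) := by
    intro n
    rw [div_eq_mul_inv, ← inv_pow]
    have : ((4:ℝ))⁻¹ = 1/4 := by norm_num
    rw [this]
    exact mul_le_mul_of_nonneg_right (hεB n) (by positivity)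
  have hnn : ∀ n : ℕ, (0:ℝ) ≤ (ε n : ℝ) / 4 ^ (n + 1) := fun n => by positivity
  have hsum : Summable (fun n : ℕ => (ε n : ℝ) / 4 ^ (n + 1)) :=
    Summable.of_nonneg_of_le hnn hbound hgeo
  -- split into partial sum and tail
  set S := ∑ n ∈ Finset.range (m + 1), (ε n : ℝ) / 4 ^ (n + 1) with hS
  have hsplit := Summable.sum_add_tsum_nat_add (m+1) hsum
  set T := ∑' n : ℕ, (ε (n + (m+1)) : ℝ) / 4 ^ (n + (m+1) + 1) with hT
  have hμST : μ = S + T := by rw [hμ, ← hsplit]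
  -- tail bounds
  have hT0 : 0 ≤ T := tsum_nonneg (fun n => by positivity)
  have htailgeo : Summable (fun n : ℕ => B * (1/4:ℝ) ^ (n + (m+1) + 1)) := by
    apply Summable.mul_left
    exact (summable_geometric_of_lt_one (by norm_num) (by norm_num)).comp_injective
      (fun a b h => by omega)
  have hTle : T ≤ B / (3 * 4 ^ (m+1)) := by
    have h1 : T ≤ ∑' n : ℕ, B * (1/4:ℝ) ^ (n + (m+1) + 1) :=
      Summable.tsum_le_tsum (fun n => hbound (n + (m+1))) (by
        exact (hsum.comp_injective (fun a b h => by omega))) htailgeo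
    have h2 : ∑' n : ℕ, B * (1/4:ℝ) ^ (n + (m+1) + 1)
        = B * (1/4:ℝ)^(m+2) * ∑' n : ℕ, (1/4:ℝ) ^ n := by
      rw [← tsum_mul_left]
      congr 1; ext n
      rw [mul_assoc, ← pow_add]
      ring_nf
    rw [h2, tsum_geometric_of_lt_one (by norm_num) (by norm_num)] at h1
    calc T ≤ B * (1/4:ℝ)^(m+2) * (1 - 1/4)⁻¹ := h1
      _ = B / (3 * 4 ^ (m+1)) := by
        rw [div_pow, one_pow, pow_succ]
        field_simp
        ring
  -- 4^{m+1} > B*M/3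
  have hlog4 : (0:ℝ) < Real.log 4 := Real.log_pos (by norm_num)
  have hfloor : Real.log (B * M / 3) / Real.log 4 < (m:ℝ) + 1 := by
    have := Int.lt_floor_add_one (Real.log (B * M / 3) / Real.log 4)
    rw [← hm] at this
    exact_mod_cast this
  have hpow : B * M / 3 < 4 ^ (m+1) := by
    have h1 : Real.log (B * M / 3) < ((m:ℝ)+1) * Real.log 4 :=
      (div_lt_iff₀ hlog4).mp hfloor
    have h2 : ((m:ℝ)+1) * Real.log 4 = Real.log ((4:ℝ) ^ (m+1)) := by
      rw [Real.log_pow]; push_cast; ring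
    rw [h2] at h1
    have hpos : (0:ℝ) < B * M / 3 := lt_of_lt_of_le one_pos hBM
    exact (Real.log_lt_log_iff hpos (by positivity)).mp h1
  -- M*T < 1
  have hMT : (M:ℝ) * T < 1 := by
    have : (M:ℝ) * T ≤ (M:ℝ) * (B / (3 * 4 ^ (m+1))) :=
      mul_le_mul_of_nonneg_left hTle (le_of_lt hMR)
    have h4 : (0:ℝ) < 4 ^ (m+1) := by positivity
    calc (M:ℝ) * T ≤ (M:ℝ) * (B / (3 * 4 ^ (m+1))) := this
      _ < 1 := by
        have heq : (M:ℝ) * (B / (3 * 4 ^ (m+1))) = (B * M) / (3 * 4 ^ (m+1)) := by ring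
        rw [heq, div_lt_one (by positivity)]
        linarith
  -- ceiling equals k
  have hceil : ⌈(M:ℝ) * S⌉ = k := by
    rw [Int.ceil_eq_iff]
    constructor
    · -- k - 1 < M*S
      have : (M:ℝ) * S = k - (M:ℝ) * T := by
        rw [← hk, hμST]; ring
      rw [this]
      push_cast
      linarith
    · have : (M:ℝ) * S = k - (M:ℝ) * T := by
        rw [← hk, hμST]; ring
      rw [this]
      have := mul_nonneg (le_of_lt hMR) hT0
      linarith
  rw [hceil, ← hk]
  field_simp
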